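/- (De Giorgi lemma) Let f : [0,∞) → [0,∞) be right-continuous, non-increasing with f(s) → 0 as s → ∞, and suppose there exist α > 0 and A > 0 such that for all s ≥ 0 and all 0 ≤ r ≤ 1, r · f(s+r) ≤ A · f(s)^{1+α}. Let s₀ ≥ 0 satisfy f(s₀)^α ≤ (2A)^{−1}. Then f(s) = 0 for all s > s₀ + 2A(1 − 2^{−α})^{−1} f(s₀)^α. -/

import Mathlib

open Filter Set

theorem stmt_7 (f : ℝ → ℝ)
    (hnonneg : ∀ s, 0 ≤ s → 0 ≤ f s)
    (hrc : ∀ s, 0 ≤ s → ContinuousWithinAt f (Ici s) s)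
    (hmono : AntitoneOn f (Ici 0))
    (hdecay : Tendsto f atTop (nhds 0))
    (α A : ℝ) (hα : 0 < α) (hA : 0 < A)
    (hiter : ∀ s, 0 ≤ s → ∀ r, 0 ≤ r → r ≤ 1 → r * f (s + r) ≤ A * f s ^ (1 + α))
    (s₀ : ℝ) (hs₀ : 0 ≤ s₀) (hsmall : f s₀ ^ α ≤ (2 * A)⁻¹) :
    ∀ s, s > s₀ + 2 * A * (1 - 2 ^ (-α))⁻¹ * f s₀ ^ α → f s = 0 := by
  intro s hs
  set c := f s₀ with hc
  have hc0 : 0 ≤ c := hnonneg s₀ hs₀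
  set q := (2:ℝ) ^ (-α) with hqdef
  have hq0 : (0:ℝ) < q := Real.rpow_pos_of_pos two_pos _
  have hq1 : q < 1 := Real.rpow_lt_one_of_one_lt_of_neg one_lt_two (neg_neg_of_pos hα)
  have h1q : (0:ℝ) < 1 - q := by linarith
  have hDnn : 0 ≤ 2 * A * (1 - q)⁻¹ * c ^ α := by
    have : (0:ℝ) ≤ c ^ α := Real.rpow_nonneg hc0 α
    positivity
  have hss0 : s₀ < s := by linarith
  have hsnn : 0 ≤ s := le_trans hs₀ hss0.le
  have hfsnn : 0 ≤ f s := hnonneg s hsnn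
  rcases hc0.eq_or_lt with hczero | hcpos
  · -- f s₀ = 0
    have : f s ≤ 0 := by
      have := hmono (mem_Ici.mpr hs₀) (mem_Ici.mpr hsnn) hss0.le
      rw [← hc, ← hczero] at this
      exact this
    linarith
  -- main case: c > 0
  have hcα : 0 < c ^ α := Real.rpow_pos_of_pos hcpos α
  set t : ℕ → ℝ := fun k => s₀ + 2 * A * c ^ α * ∑ i ∈ Finset.range k, q ^ i with htdef
  have hsum_nn : ∀ k, (0:ℝ) ≤ ∑ i ∈ Finset.range k, q ^ i := fun k =>
    Finset.sum_nonneg fun i _ => pow_nonneg hq0.le i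
  have hsum_le : ∀ k, (∑ i ∈ Finset.range k, q ^ i) ≤ (1 - q)⁻¹ := by
    intro k
    rw [geom_sum_eq hq1.ne k]
    rw [div_le_iff_of_neg (by linarith : q - 1 < 0)]
    have : 0 < q ^ k := pow_pos hq0 k
    have h2 : (1 - q)⁻¹ * (q - 1) = -1 := by field_simp; ring
    rw [h2]; linarith
  have hts₀ : ∀ k, s₀ ≤ t k := by
    intro k
    have : 0 ≤ 2 * A * c ^ α * ∑ i ∈ Finset.range k, q ^ i := by positivity
    simp only [htdef]; linarith
  have htnn : ∀ k, 0 ≤ t k := fun k => le_trans hs₀ (hts₀ k)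
  have hts : ∀ k, t k ≤ s := by
    intro k
    have h1 : 2 * A * c ^ α * (∑ i ∈ Finset.range k, q ^ i) ≤ 2 * A * c ^ α * (1 - q)⁻¹ :=
      mul_le_mul_of_nonneg_left (hsum_le k) (by positivity)
    have h2 : 2 * A * c ^ α * (1 - q)⁻¹ = 2 * A * (1 - q)⁻¹ * c ^ α := by ring
    simp only [htdef]
    calc s₀ + 2 * A * c ^ α * (∑ i ∈ Finset.range k, q ^ i)
        ≤ s₀ + 2 * A * (1 - q)⁻¹ * c ^ α := by linarith [h1, h2.le]
      _ ≤ s := hs.le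
  have h2Acα : 2 * A * c ^ α ≤ 1 := by
    have : 2 * A * c ^ α ≤ 2 * A * (2 * A)⁻¹ :=
      mul_le_mul_of_nonneg_left hsmall (by positivity)
    rwa [mul_inv_cancel₀ (by positivity : (2:ℝ) * A ≠ 0)] at this
  -- induction bound
  have H : ∀ k : ℕ, f (t k) ≤ c * ((2:ℝ)⁻¹) ^ k := by
    intro k
    induction k with
    | zero => simp [htdef]; exact le_rfl
    | succ k ih =>
      set r := 2 * A * c ^ α * q ^ k with hrdef
      have hrpos : 0 < r := by positivity
      have hrle1 : r ≤ 1 := by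
        have hqk : q ^ k ≤ 1 := pow_le_one₀ hq0.le hq1.le
        calc r = 2 * A * c ^ α * q ^ k := rfl
          _ ≤ 2 * A * c ^ α * 1 := mul_le_mul_of_nonneg_left hqk (by positivity)
          _ ≤ 1 := by rw [mul_one]; exact h2Acα
      have ht1 : t (k + 1) = t k + r := by
        simp only [htdef, hrdef, Finset.sum_range_succ]; ring
      have step := hiter (t k) (htnn k) r hrpos.le hrle1
      have hfnn : 0 ≤ f (t k) := hnonneg _ (htnn k)
      have hmonoP : f (t k) ^ (1 + α) ≤ (c * ((2:ℝ)⁻¹) ^ k) ^ (1 + α) :=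
        Real.rpow_le_rpow hfnn ih (by linarith)
      -- key algebraic identity
      have hkey : A * (c * ((2:ℝ)⁻¹) ^ k) ^ (1 + α) = r * (c * ((2:ℝ)⁻¹) ^ (k + 1)) := by
        have hpk : (0:ℝ) < ((2:ℝ)⁻¹) ^ k := by positivity
        have e1 : (c * ((2:ℝ)⁻¹) ^ k) ^ (1 + α)
            = c ^ (1 + α) * (((2:ℝ)⁻¹) ^ k) ^ (1 + α) :=
          Real.mul_rpow hc0 hpk.le
        have e2 : c ^ (1 + α) = c * c ^ α := by
          rw [Real.rpow_add hcpos, Real.rpow_one]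
        have e3 : (((2:ℝ)⁻¹) ^ k) ^ (1 + α)
            = ((2:ℝ)⁻¹) ^ k * (((2:ℝ)⁻¹) ^ k) ^ α := by
          rw [Real.rpow_add hpk, Real.rpow_one]
        have e4 : (((2:ℝ)⁻¹) ^ k) ^ α = q ^ k := by
          rw [← Real.rpow_natCast ((2:ℝ)⁻¹) k, ← Real.rpow_mul (by norm_num),
            mul_comm (k:ℝ) α, Real.rpow_mul (by norm_num : (0:ℝ) ≤ (2:ℝ)⁻¹),
            Real.rpow_natCast, hqdef]
          congr 1
          rw [Real.rpow_neg (by norm_num), ← Real.inv_rpow (by norm_num)]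
        rw [e1, e2, e3, e4, hrdef, pow_succ]
        ring
      have hchain : r * f (t (k + 1)) ≤ r * (c * ((2:ℝ)⁻¹) ^ (k + 1)) := by
        rw [ht1]
        calc r * f (t k + r) ≤ A * f (t k) ^ (1 + α) := step
          _ ≤ A * (c * ((2:ℝ)⁻¹) ^ k) ^ (1 + α) :=
            mul_le_mul_of_nonneg_left hmonoP hA.le
          _ = r * (c * ((2:ℝ)⁻¹) ^ (k + 1)) := hkey
      exact le_of_mul_le_mul_left hchain hrpos
  -- conclude
  have hfs_le : ∀ k : ℕ, f s ≤ c * ((2:ℝ)⁻¹) ^ k := by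
    intro k
    exact le_trans (hmono (mem_Ici.mpr (htnn k)) (mem_Ici.mpr hsnn) (hts k)) (H k)
  have hlim : Tendsto (fun k : ℕ => c * ((2:ℝ)⁻¹) ^ k) atTop (nhds 0) := by
    have := (tendsto_pow_atTop_nhds_zero_of_lt_one (by norm_num : (0:ℝ) ≤ 2⁻¹)
      (by norm_num : (2:ℝ)⁻¹ < 1)).const_mul c
    simpa using this
  have : f s ≤ 0 := ge_of_tendsto' hlim hfs_le
  linarith
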